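/- Let Ω ⊂ ℂ be a domain, z₀ ∈ Ω, and H : ℝ₊ → ℝ₊ an integrable function (∫₀^∞ H(r) dr < ∞) such that dist(z, ∂Ω) ≤ H(dist_qh(z, z₀)) for all z ∈ Ω, where dist_qh is the quasihyperbolic metric of Ω. Then every minimal quasihyperbolic geodesic γ in Ω starting at z₀ has Euclidean arclength at most ∫₀^∞ H(r) dr. -/

import Mathlib

open Metric MeasureTheory intervalIntegral

/-- Quasihyperbolic distance in a domain `Ω ⊂ ℂ`: infimum of `∫ |dζ|/dist(ζ,∂Ω)` over
differentiable curves in `Ω` joining the two points. -/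
noncomputable def qhDist (Ω : Set ℂ) (x y : ℂ) : ℝ :=
  sInf { L : ℝ | ∃ γ : ℝ → ℂ, γ 0 = x ∧ γ 1 = y ∧ (∀ t ∈ Set.Icc (0 : ℝ) 1, γ t ∈ Ω) ∧
    DifferentiableOn ℝ γ (Set.Icc 0 1) ∧
    L = ∫ t in (0 : ℝ)..1, ‖derivWithin γ (Set.Icc 0 1) t‖ / infDist (γ t) Ωᶜ }

/-- Lemma 11.3: an integrable domain is geodesically bounded — every minimal
quasihyperbolic geodesic starting at the base point has Euclidean arclength at most
`∫₀^∞ H(r) dr`. -/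
theorem stmt_12 (Ω : Set ℂ) (hΩ : IsOpen Ω) (hΩc : Ωᶜ.Nonempty) (hconn : IsConnected Ω)
    (z₀ : ℂ) (hz₀ : z₀ ∈ Ω)
    (H : ℝ → ℝ) (hH0 : ∀ r, 0 ≤ H r) (hHint : IntegrableOn H (Set.Ioi (0 : ℝ)))
    (hdom : ∀ z ∈ Ω, infDist z Ωᶜ ≤ H (qhDist Ω z₀ z))
    (s : ℝ) (hs : 0 ≤ s) (γ : ℝ → ℂ) (hγ0 : γ 0 = z₀)
    (hγΩ : ∀ t ∈ Set.Icc 0 s, γ t ∈ Ω)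
    (hunit : ∀ t ∈ Set.Icc 0 s, ∃ v : ℂ, ‖v‖ = 1 ∧ HasDerivAt γ v t)
    (hmin : ∀ t ∈ Set.Icc 0 s,
      qhDist Ω z₀ (γ t) = ∫ u in (0 : ℝ)..t, (infDist (γ u) Ωᶜ)⁻¹) :
    s ≤ ∫ r in Set.Ioi (0 : ℝ), H r := by
  rcases eq_or_lt_of_le hs with rfl | hs'
  · exact setIntegral_nonneg measurableSet_Ioi fun r _ => hH0 r
  set D : ℝ → ℝ := fun t => (infDist (γ t) Ωᶜ)⁻¹ with hD
  set g : ℝ → ℝ := fun t => ∫ u in (0:ℝ)..t, D u with hg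
  -- infDist positivity
  have hdpos : ∀ t ∈ Set.Icc (0:ℝ) s, 0 < infDist (γ t) Ωᶜ := fun t ht =>
    (hΩ.isClosed_compl.notMem_iff_infDist_pos hΩc).mp (by simpa using hγΩ t ht)
  have hDpos : ∀ t ∈ Set.Icc (0:ℝ) s, 0 < D t := fun t ht => inv_pos.mpr (hdpos t ht)
  -- D continuous at each point of Icc
  have hDcont : ∀ t ∈ Set.Icc (0:ℝ) s, ContinuousAt D t := by
    intro t ht
    obtain ⟨v, _, hv⟩ := hunit t ht
    exact (((continuous_infDist_pt Ωᶜ).continuousAt.comp hv.continuousAt).inv₀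
      (hdpos t ht).ne')
  have hDcontOn : ContinuousOn D (Set.Icc 0 s) := fun t ht => (hDcont t ht).continuousWithinAt
  have hDint : ∀ t ∈ Set.Icc (0:ℝ) s, IntervalIntegrable D volume 0 t := by
    intro t ht
    apply ContinuousOn.intervalIntegrable
    apply hDcontOn.mono
    rw [Set.uIcc_of_le ht.1]
    exact Set.Icc_subset_Icc le_rfl ht.2
  -- derivative of g on interior
  have hgderiv : ∀ t ∈ Set.Ioo (0:ℝ) s, HasDerivAt g (D t) t := by
    intro t ht
    have hIcc : t ∈ Set.Icc (0:ℝ) s := Set.Ioo_subset_Icc_self ht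
    refine integral_hasDerivAt_right (hDint t hIcc) ?_ (hDcont t hIcc)
    exact (continuousOn_of_forall_continuousAt fun u hu =>
      hDcont u (Set.Ioo_subset_Icc_self hu)).stronglyMeasurableAtFilter isOpen_Ioo _ ht
  -- g continuous on Icc
  have hgcont : ContinuousOn g (Set.Icc 0 s) := by
    intro t ht
    refine continuousWithinAt_primitive (measure_singleton t) ?_
    simpa [sup_eq_right.mpr hs] using hDint s ⟨hs, le_rfl⟩
  -- g strictly monotone on Icc
  have hgmono : StrictMonoOn g (Set.Icc 0 s) := by
    refine strictMonoOn_of_deriv_pos (convex_Icc 0 s) hgcont ?_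
    intro t ht
    rw [interior_Icc] at ht
    rw [(hgderiv t ht).deriv]
    exact hDpos t (Set.Ioo_subset_Icc_self ht)
  have hginj : Set.InjOn g (Set.Ioo 0 s) :=
    (hgmono.injOn).mono Set.Ioo_subset_Icc_self
  have hgderiv' : ∀ t ∈ Set.Ioo (0:ℝ) s, HasDerivWithinAt g (D t) (Set.Ioo 0 s) t :=
    fun t ht => (hgderiv t ht).hasDerivWithinAt
  -- image of Ioo under g lands in Ioi 0
  have himg : g '' Set.Ioo 0 s ⊆ Set.Ioi 0 := by
    rintro _ ⟨t, ht, rfl⟩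
    exact intervalIntegral_pos_of_pos_on (hDint t (Set.Ioo_subset_Icc_self ht))
      (fun u hu => hDpos u ⟨hu.1.le, hu.2.le.trans ht.2.le⟩) ht.1
  -- key pointwise bound: 1 ≤ |D t| * H (g t) on Ioo
  have hkey : ∀ t ∈ Set.Ioo (0:ℝ) s, (1:ℝ) ≤ |D t| • H (g t) := by
    intro t ht
    have hIcc : t ∈ Set.Icc (0:ℝ) s := Set.Ioo_subset_Icc_self ht
    have h1 : infDist (γ t) Ωᶜ ≤ H (g t) := by
      have := hdom (γ t) (hγΩ t hIcc)
      rwa [hmin t hIcc] at this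
    rw [abs_of_pos (hDpos t hIcc), smul_eq_mul, hD]
    calc (1:ℝ) = (infDist (γ t) Ωᶜ)⁻¹ * infDist (γ t) Ωᶜ :=
          (inv_mul_cancel₀ (hdpos t hIcc).ne').symm
      _ ≤ (infDist (γ t) Ωᶜ)⁻¹ * H (g t) := by
          exact mul_le_mul_of_nonneg_left h1 (hDpos t hIcc).le
  -- change of variables
  have hCoV : ∫ x in g '' Set.Ioo 0 s, H x = ∫ t in Set.Ioo 0 s, |D t| • H (g t) :=
    integral_image_eq_integral_abs_deriv_smul measurableSet_Ioo hgderiv' hginj H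
  have hHimg : IntegrableOn H (g '' Set.Ioo 0 s) := hHint.mono_set himg
  have hint2 : IntegrableOn (fun t => |D t| • H (g t)) (Set.Ioo 0 s) :=
    (integrableOn_image_iff_integrableOn_abs_deriv_smul measurableSet_Ioo hgderiv' hginj H).mp
      hHimg
  calc s = ∫ _t in Set.Ioo (0:ℝ) s, (1:ℝ) := by
        simp [Real.volume_Ioo, hs]
    _ ≤ ∫ t in Set.Ioo (0:ℝ) s, |D t| • H (g t) := by
        refine setIntegral_mono_on ((integrableOn_const_iff (C := (1:ℝ))).mpr (Or.inr (by simp [Real.volume_Ioo])))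
          hint2 measurableSet_Ioo hkey
    _ = ∫ x in g '' Set.Ioo 0 s, H x := hCoV.symm
    _ ≤ ∫ r in Set.Ioi (0:ℝ), H r := by
        refine setIntegral_mono_set hHint ?_ (Filter.Eventually.of_forall himg)
        exact Filter.Eventually.of_forall fun r => hH0 r
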